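/- arXiv:2201.04094 — 4 statements merged into one kernel-verified Lean document; each statement's English description precedes it below -/
import Mathlib

section
/- Let d be a positive integer, g a positive integer, and α a nonzero algebraic number such that [ℚ(α):ℚ] ≤ 2g and [ℚ(ζ_d):ℚ] > 4g². If ζ is a d-th root of unity with ζ ≠ 1 and α·ζ is also algebraic of degree ≤ 2g over ℚ, then a contradiction follows; i.e., α is the unique d-th root of α^d generating an extension of ℚ of degree ≤ 2g. -/
open scoped IntermediateField


/-- Among the `d`-th roots of `α^d`, only `α` generates an extension of `ℚ`
of degree at most `2g`, since `[ℚ(ζ_d):ℚ] > 4g²`: if `ζ ≠ 1` is a `d`-th root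
of unity and `α·ζ` also has degree ≤ 2g over ℚ, we get a contradiction. -/
theorem unique_dth_root_of_small_degree (d g : ℕ) (hd : Nat.Prime d) (hg : 0 < g)
    (α : ℂ) (hα0 : α ≠ 0) (hαint : IsIntegral ℚ α)
    (hαdeg : (minpoly ℚ α).natDegree ≤ 2 * g)
    (hζd : ∀ ζd : ℂ, IsPrimitiveRoot ζd d → 4 * g ^ 2 < (minpoly ℚ ζd).natDegree)
    (ζ : ℂ) (hζ : ζ ^ d = 1) (hζ1 : ζ ≠ 1)
    (hint : IsIntegral ℚ (α * ζ))
    (hdeg : (minpoly ℚ (α * ζ)).natDegree ≤ 2 * g) :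
    False := by
  -- ζ is a primitive d-th root of unity
  have hord : orderOf ζ = d := by
    have h1 : orderOf ζ ∣ d := orderOf_dvd_of_pow_eq_one hζ
    rcases (Nat.Prime.eq_one_or_self_of_dvd hd _ h1) with h | h
    · exact absurd (orderOf_eq_one_iff.mp h) hζ1
    · exact h
  have hprim : IsPrimitiveRoot ζ d := hord ▸ IsPrimitiveRoot.orderOf ζ
  have hbig := hζd ζ hprim
  -- the tower ℚ ⊆ ℚ(α) ⊆ ℚ(α)(αζ)
  set F : IntermediateField ℚ ℂ := ℚ⟮α⟯ with hF
  haveI : FiniteDimensional ℚ F := IntermediateField.adjoin.finiteDimensional hαint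
  have hintF : IsIntegral F (α * ζ) := IsIntegral.tower_top hint
  set L : IntermediateField F ℂ := F⟮α * ζ⟯ with hL
  haveI : FiniteDimensional F L := IntermediateField.adjoin.finiteDimensional hintF
  -- degree bounds
  have h1 : Module.finrank ℚ F ≤ 2 * g := by
    rw [hF, IntermediateField.adjoin.finrank hαint]; exact hαdeg
  have h2 : Module.finrank F L ≤ 2 * g := by
    rw [hL, IntermediateField.adjoin.finrank hintF]
    have hdvd := minpoly.dvd_map_of_isScalarTower ℚ F (α * ζ)
    have hne : (minpoly ℚ (α * ζ)).map (algebraMap ℚ F) ≠ 0 := by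
      simpa [Polynomial.map_eq_zero] using minpoly.ne_zero hint
    calc (minpoly F (α * ζ)).natDegree
        ≤ ((minpoly ℚ (α * ζ)).map (algebraMap ℚ F)).natDegree :=
          Polynomial.natDegree_le_of_dvd hdvd hne
      _ = (minpoly ℚ (α * ζ)).natDegree := Polynomial.natDegree_map _
      _ ≤ 2 * g := hdeg
  -- ζ belongs to L
  have hαL : α ∈ L := by
    have : α ∈ F := IntermediateField.mem_adjoin_simple_self ℚ α
    exact L.algebraMap_mem ⟨α, this⟩
  have hαζL : α * ζ ∈ L := IntermediateField.mem_adjoin_simple_self F (α * ζ)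
  have hζL : ζ ∈ L := by
    have : ζ = α⁻¹ * (α * ζ) := by field_simp
    rw [this]
    exact mul_mem (inv_mem hαL) hαζL
  -- view L as a ℚ-extension
  set E : IntermediateField ℚ ℂ := L.restrictScalars ℚ with hEdef
  haveI : FiniteDimensional ℚ E := FiniteDimensional.trans ℚ F L
  have hζE : ζ ∈ E := hζL
  have hfr : Module.finrank ℚ E = Module.finrank ℚ F * Module.finrank F L :=
    (Module.finrank_mul_finrank ℚ F L).symm
  -- degree of ζ over ℚ is at most 4g²
  have hle : (minpoly ℚ ζ).natDegree ≤ 4 * g ^ 2 := by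
    calc (minpoly ℚ ζ).natDegree
        = (minpoly ℚ (⟨ζ, hζE⟩ : E)).natDegree :=
          congrArg Polynomial.natDegree
            (minpoly.algebraMap_eq (algebraMap E ℂ).injective (⟨ζ, hζE⟩ : E))
      _ ≤ Module.finrank ℚ E := minpoly.natDegree_le _
      _ = Module.finrank ℚ F * Module.finrank F L := hfr
      _ ≤ (2 * g) * (2 * g) := Nat.mul_le_mul h1 h2
      _ = 4 * g ^ 2 := by ring
  omega
end

section
/- Let G be a finite group, I a normal subgroup, and ρ an irreducible complex representation of G. Suppose χ is a one-dimensional character of G trivial on I (an 'unramified' character). Then the set of such characters χ with ρ ⊗ χ ≅ ρ forms a cyclic group of order dividing the order of the cyclic group G/I (assuming G/I is cyclic), and its order m satisfies m = ⟨Res_I ρ, Res_I ρ⟩ if the stabilizer analysis of Clifford theory applies; in particular, the number of one-dimensional characters χ of the cyclic group G/I with ρ ⊗ χ ≅ ρ equals ⟨Res_I ρ, Res_I ρ⟩. -/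
open scoped ComplexConjugate

noncomputable section AuxiliaryLemmasForCUST

open CategoryTheory Module Representation FDRep Polynomial

variable {G : Type} [Group G]

/-- Twist of a representation by a one-dimensional character. -/
def myTwist {V : Type} [AddCommGroup V] [Module ℂ V] (ρ : Representation ℂ G V)
    (χ : G →* ℂˣ) : Representation ℂ G V where
  toFun g := (χ g : ℂ) • ρ g
  map_one' := by simp
  map_mul' g h := by
    show (χ (g*h) : ℂ) • ρ (g*h) = ((χ g : ℂ) • ρ g) * ((χ h : ℂ) • ρ h)
    rw [map_mul, map_mul, Units.val_mul, smul_mul_smul_comm]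

lemma char_myTwist (ρ : FDRep ℂ G) (χ : G →* ℂˣ) (g : G) :
    (FDRep.of (myTwist ρ.ρ χ)).character g = (χ g : ℂ) * ρ.character g := by
  show LinearMap.trace ℂ _ ((χ g : ℂ) • ρ.ρ g) = _
  rw [map_smul, smul_eq_mul]; rfl

/-- The subrepresentation on an invariant submodule. -/
def subRep (ρ : FDRep ℂ G) (p : Submodule ℂ ρ)
    (hp : ∀ (g : G), ∀ v ∈ p, ρ.ρ g v ∈ p) : Representation ℂ G p where
  toFun g := (ρ.ρ g).restrict (hp g)
  map_one' := by ext v; simp [LinearMap.restrict_apply]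
  map_mul' g h := by ext v; simp [LinearMap.restrict_apply]

/-- An invariant submodule of an irreducible representation is trivial. -/
lemma invariant_eq_bot_or_top (ρ : FDRep ℂ G) (hρ : Simple ρ)
    (p : Submodule ℂ ρ) (hp : ∀ (g : G), ∀ v ∈ p, ρ.ρ g v ∈ p) :
    p = ⊥ ∨ p = ⊤ := by
  by_cases hbot : p = ⊥
  · exact Or.inl hbot
  right
  let ι : FDRep.of (subRep ρ p hp) ⟶ ρ :=
    { hom := FGModuleCat.ofHom p.subtype
      comm := fun g => by ext v; rfl }
  have hne : ι ≠ 0 := by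
    obtain ⟨v, hv, hv0⟩ := (Submodule.ne_bot_iff p).mp hbot
    intro h0
    have h1 : ι.hom.hom.hom ⟨v, hv⟩ = 0 := by rw [h0]; rfl
    exact hv0 h1
  haveI : Mono ι := by
    apply ConcreteCategory.mono_of_injective
    exact fun a b h => Subtype.ext (by exact h)
  have hiso : IsIso ι := (Simple.mono_isIso_iff_nonzero ι).mpr hne
  refine eq_top_iff.mpr fun v _ => ?_
  have h1 : (CategoryTheory.inv ι ≫ ι) = 𝟙 ρ := IsIso.inv_hom_id ι
  have h2 := congrArg Action.Hom.hom h1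
  simp only [Action.comp_hom, Action.id_hom] at h2
  have h4 : ι.hom.hom.hom ((CategoryTheory.inv ι).hom.hom.hom v) = v :=
    LinearMap.congr_fun (f := ι.hom.hom.hom.comp (CategoryTheory.inv ι).hom.hom.hom) (g := LinearMap.id)
      (congrArg (fun x => x.hom.hom) h2) v
  rw [← h4]
  exact ((CategoryTheory.inv ι).hom.hom.hom v).2

/-- The averaged product of characters computes the dimension of the homomorphism space. -/
theorem my_average_char [Fintype G] (V W : FDRep ℂ G) :
    (Fintype.card G : ℂ)⁻¹ * ∑ g : G, V.character g * W.character g⁻¹ =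
      (finrank ℂ (W ⟶ V) : ℂ) := by
  haveI : Invertible (Fintype.card G : ℂ) :=
    invertibleOfNonzero (Nat.cast_ne_zero.mpr Fintype.card_ne_zero)
  haveI : Invertible (Nat.card G : ℂ) := by rwa [Nat.card_eq_fintype_card]
  have h := FDRep.scalar_product_char_eq_finrank_equivariant W V
  rwa [Nat.card_eq_fintype_card] at h

/-- If a character does not stabilize the (irreducible) character of `ρ`, the corresponding
averaged sum vanishes. -/
lemma average_eq_zero_of_not_stab [Fintype G] (ρ : FDRep ℂ G) (hρ : Simple ρ) (χ : G →* ℂˣ)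
    (h : ¬ ∀ g : G, (χ g : ℂ) * ρ.character g = ρ.character g) :
    (Fintype.card G : ℂ)⁻¹ * ∑ g : G, (χ g : ℂ) * ρ.character g * ρ.character g⁻¹ = 0 := by
  have key : ∀ g : G, (χ g : ℂ) * ρ.character g * ρ.character g⁻¹
      = (FDRep.of (myTwist ρ.ρ χ)).character g * ρ.character g⁻¹ := fun g => by
    rw [char_myTwist]
  rw [Finset.sum_congr rfl (fun g _ => key g), my_average_char]
  norm_cast
  by_contra hfr
  haveI : Nontrivial (ρ ⟶ FDRep.of (myTwist ρ.ρ χ)) := by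
    apply Module.nontrivial_of_finrank_pos (R := ℂ)
    omega
  obtain ⟨f, hf⟩ := exists_ne (0 : ρ ⟶ FDRep.of (myTwist ρ.ρ χ))
  apply h
  let φ : (↥ρ) →ₗ[ℂ] (↥ρ) := f.hom.hom.hom
  have hcomm : ∀ (g : G) (v : ↥ρ), φ (ρ.ρ g v) = (χ g : ℂ) • ρ.ρ g (φ v) := by
    intro g v
    have h5 := f.comm g
    have h6 : φ.comp (ρ.ρ g) = (myTwist ρ.ρ χ g).comp φ := congrArg (fun x => x.hom.hom) h5
    exact LinearMap.congr_fun h6 v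
  have hker : ∀ (g : G), ∀ v ∈ LinearMap.ker φ, ρ.ρ g v ∈ LinearMap.ker φ := by
    intro g v hv
    rw [LinearMap.mem_ker] at hv ⊢
    rw [hcomm g v, hv, map_zero, smul_zero]
  have hkb : LinearMap.ker φ = ⊥ := by
    rcases invariant_eq_bot_or_top ρ hρ _ hker with hh | hh
    · exact hh
    · exfalso
      apply hf
      apply Action.Hom.ext
      apply FGModuleCat.hom_ext
      show φ = 0
      apply LinearMap.ext fun v => ?_
      have : v ∈ LinearMap.ker φ := hh ▸ Submodule.mem_top
      simpa using this
  have hinj : Function.Injective φ := LinearMap.ker_eq_bot.mp hkb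
  have hsurj : Function.Surjective φ := (LinearMap.injective_iff_surjective).mp hinj
  let e : (↥ρ) ≃ₗ[ℂ] (↥ρ) := LinearEquiv.ofBijective φ ⟨hinj, hsurj⟩
  intro g
  rw [← char_myTwist ρ χ g]
  show LinearMap.trace ℂ _ (myTwist ρ.ρ χ g) = LinearMap.trace ℂ _ (ρ.ρ g)
  have hconj : myTwist ρ.ρ χ g = e.conj (ρ.ρ g) := by
    apply LinearMap.ext fun v => ?_
    have h7 : e.conj (ρ.ρ g) v = φ (ρ.ρ g (e.symm v)) := rfl
    rw [h7, hcomm g (e.symm v)]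
    show (χ g : ℂ) • ρ.ρ g v = (χ g : ℂ) • ρ.ρ g (φ (e.symm v))
    congr 1
    have : φ (e.symm v) = v := e.apply_symm_apply v
    rw [this]
  rw [hconj, LinearMap.trace_conj']

/-- The trace of the inverse of a finite-order endomorphism over `ℂ` is the complex conjugate
of its trace. -/
lemma trace_inv_eq_conj_trace {n : ℕ} (hn : n ≠ 0) {V : Type} [AddCommGroup V] [Module ℂ V]
    [FiniteDimensional ℂ V] (f f' : Module.End ℂ V)
    (hf'f : f' * f = 1) (hff' : f * f' = 1) (hfn : f ^ n = 1) :
    LinearMap.trace ℂ V f' = conj (LinearMap.trace ℂ V f) := by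
  classical
  have hsq : Squarefree (X ^ n - C (1 : ℂ)) :=
    (Polynomial.separable_X_pow_sub_C (1 : ℂ)
      (by exact_mod_cast Nat.cast_ne_zero.mpr hn) one_ne_zero).squarefree
  have hev : aeval f (X ^ n - C (1 : ℂ)) = 0 := by
    simp [map_sub, map_pow, hfn]
  have hss : f.IsSemisimple := Module.End.isSemisimple_of_squarefree_aeval_eq_zero hsq hev
  have hfs : f.IsFinitelySemisimple := hss.isFinitelySemisimple
  set N : ℂ → Submodule ℂ V := fun μ => f.eigenspace μ with hN
  have heig : ∀ μ, (f.genEigenspace μ 1 : Submodule ℂ V) = N μ := fun μ => rfl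
  have hind : iSupIndep N := by
    have := Module.End.independent_genEigenspace f 1
    simpa [heig] using this
  have htop : ⨆ μ, N μ = ⊤ := by
    have := Module.End.iSup_maxGenEigenspace_eq_top f
    have h2 : ∀ μ, f.maxGenEigenspace μ = N μ := fun μ =>
      hfs.maxGenEigenspace_eq_eigenspace μ
    simpa [h2] using this
  have hint : DirectSum.IsInternal N :=
    (DirectSum.isInternal_submodule_iff_iSupIndep_and_iSup_eq_top N).mpr ⟨hind, htop⟩
  have hfin : {μ | N μ ≠ ⊥}.Finite := WellFoundedGT.finite_ne_bot_of_iSupIndep hind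
  have hcomm : Commute f f' := by
    unfold Commute SemiconjBy
    rw [hff', hf'f]
  have hmf : ∀ μ, Set.MapsTo f (N μ) (N μ) := fun μ => by
    have := Module.End.mapsTo_genEigenspace_of_comm (Commute.refl f) μ 1
    simpa [heig] using this
  have hmf' : ∀ μ, Set.MapsTo f' (N μ) (N μ) := fun μ => by
    have := Module.End.mapsTo_genEigenspace_of_comm hcomm μ 1
    simpa [heig] using this
  rw [LinearMap.trace_eq_sum_trace_restrict' hint hfin hmf,
    LinearMap.trace_eq_sum_trace_restrict' hint hfin hmf']
  rw [map_sum]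
  apply Finset.sum_congr rfl
  intro μ hμ
  have hμb : N μ ≠ ⊥ := by simpa using (Set.Finite.mem_toFinset hfin).mp hμ
  obtain ⟨v, hv, hv0⟩ := (Submodule.ne_bot_iff _).mp hμb
  have hfv : f v = μ • v := Module.End.mem_eigenspace_iff.mp hv
  have hμn : μ ^ n = 1 := by
    have hpow : ∀ k : ℕ, (f ^ k) v = μ ^ k • v := by
      intro k
      induction k with
      | zero => simp
      | succ k ih =>
        rw [pow_succ, Module.End.mul_apply, hfv, map_smul, ih, smul_smul, ← pow_succ']
    have h1 : v = μ ^ n • v := by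
      have := hpow n
      rwa [hfn, Module.End.one_apply] at this
    have h2 : (μ ^ n - 1) • v = 0 := by
      rw [sub_smul, one_smul, ← h1, sub_self]
    rcases smul_eq_zero.mp h2 with h | h
    · exact sub_eq_zero.mp h
    · exact absurd h hv0
  have hμ0 : μ ≠ 0 := fun h => by simp [h, zero_pow hn] at hμn
  have hconjμ : conj μ = μ⁻¹ := by
    have habs : ‖μ‖ = 1 := by
      have : ‖μ‖ ^ n = 1 := by
        rw [← norm_pow, hμn, norm_one]
      rcases lt_trichotomy ‖μ‖ 1 with h | h | h
      · exact absurd this (by nlinarith [pow_lt_one₀ (norm_nonneg μ) h hn])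
      · exact h
      · exact absurd this (by nlinarith [one_lt_pow₀ h hn])
    field_simp
    rw [mul_comm, Complex.mul_conj, Complex.normSq_eq_norm_sq, habs]
    norm_num
  have hres : f.restrict (hmf μ) = (μ : ℂ) • LinearMap.id := by
    apply LinearMap.ext fun x => ?_
    have hx : f x.1 = μ • x.1 := Module.End.mem_eigenspace_iff.mp x.2
    apply Subtype.ext
    show f x.1 = μ • x.1
    exact hx
  have hres' : f'.restrict (hmf' μ) = (μ⁻¹ : ℂ) • LinearMap.id := by
    apply LinearMap.ext fun x => ?_
    have hx : f x.1 = μ • x.1 := Module.End.mem_eigenspace_iff.mp x.2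
    have hx' : f' x.1 = μ⁻¹ • x.1 := by
      have h1 : f' (f x.1) = x.1 := by
        rw [← Module.End.mul_apply, hf'f, Module.End.one_apply]
      rw [hx, map_smul] at h1
      exact (eq_inv_smul_iff₀ hμ0).mpr h1
    apply Subtype.ext
    show f' x.1 = μ⁻¹ • x.1
    exact hx'
  rw [hres, hres', map_smul, map_smul, smul_eq_mul, smul_eq_mul, map_mul, hconjμ]
  congr 1
  rw [LinearMap.trace_id]
  simp

/-- Complex conjugation of the character of a finite group is given by inversion. -/
lemma conj_character [Fintype G] (ρ : FDRep ℂ G) (x : G) :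
    conj (ρ.character x) = ρ.character x⁻¹ := by
  have h := trace_inv_eq_conj_trace (n := Fintype.card G) Fintype.card_ne_zero
    (ρ.ρ x) (ρ.ρ x⁻¹)
    (by rw [← map_mul, inv_mul_cancel, map_one])
    (by rw [← map_mul, mul_inv_cancel, map_one])
    (by rw [← map_pow, pow_card_eq_one, map_one])
  exact h.symm

/-- The group of `ℂˣ`-valued characters of a finite commutative group is in bijection with
additive characters valued in `ℂ`. -/
def homUnitsEquivAddChar (Q : Type) [CommGroup Q] :
    (Q →* ℂˣ) ≃ AddChar (Additive Q) ℂ where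
  toFun ψ :=
    { toFun := fun a => ((ψ a.toMul : ℂˣ) : ℂ)
      map_zero_eq_one' := by simp
      map_add_eq_mul' := fun a b => by simp }
  invFun φ := MonoidHom.toHomUnits
    { toFun := fun q => φ (Additive.ofMul q)
      map_one' := by simp [φ.map_zero_eq_one]
      map_mul' := fun a b => by simpa using φ.map_add_eq_mul (Additive.ofMul a) (Additive.ofMul b) }
  left_inv ψ := by
    ext q
    rfl
  right_inv φ := by
    ext a
    rfl

instance fintypeHomUnits (Q : Type) [CommGroup Q] [Fintype Q] :
    Fintype (Q →* ℂˣ) :=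
  Fintype.ofEquiv _ (homUnitsEquivAddChar Q).symm

lemma card_homUnits (Q : Type) [CommGroup Q] [Fintype Q] :
    Fintype.card (Q →* ℂˣ) = Fintype.card Q := by
  rw [Fintype.card_congr (homUnitsEquivAddChar Q)]
  rw [show Fintype.card Q = Fintype.card (Additive Q) from Fintype.card_congr Additive.ofMul]
  exact AddChar.card_eq

lemma sum_homUnits (Q : Type) [CommGroup Q] [Fintype Q] [DecidableEq Q] (q : Q) :
    ∑ ψ : Q →* ℂˣ, ((ψ q : ℂˣ) : ℂ) = if q = 1 then (Fintype.card Q : ℂ) else 0 := by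
  split_ifs with hq
  · subst hq
    simp [card_homUnits]
  · have hex : ∃ ψ : Q →* ℂˣ, ψ q ≠ 1 := by
      have h0 : Additive.ofMul q ≠ 0 := by
        simpa using hq
      obtain ⟨φ, hφ⟩ := AddChar.exists_apply_ne_zero.mpr h0
      refine ⟨(homUnitsEquivAddChar Q).symm φ, fun h => hφ ?_⟩
      have : (((homUnitsEquivAddChar Q).symm φ) q : ℂ) = φ (Additive.ofMul q) := rfl
      rw [h] at this
      exact this.symm
    obtain ⟨ψ₀, hψ₀⟩ := hex
    have := sum_hom_units_eq_zero (G := Q →* ℂˣ) (R := ℂ)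
      { toFun := fun ψ => ((ψ q : ℂˣ) : ℂ)
        map_one' := by simp
        map_mul' := fun ψ₁ ψ₂ => by simp }
      (fun h => hψ₀ (Units.ext (by simpa using DFunLike.congr_fun h ψ₀)))
    simpa using this

end AuxiliaryLemmasForCUST

/-- For `G` finite with normal subgroup `I` and cyclic quotient `G/I`, and `ρ`
an irreducible complex representation of `G`, the number of one-dimensional
characters `χ` of `G` trivial on `I` (i.e. characters of the cyclic group `G/I`)
with `ρ ⊗ χ ≅ ρ` (equivalently, with equal characters) equals the inner product
`⟨Res_I ρ, Res_I ρ⟩`. -/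
theorem card_unramified_stabilizing_twists (G : Type) [Group G] [Fintype G]
    (I : Subgroup G) [I.Normal] [IsCyclic (G ⧸ I)]
    (ρ : FDRep ℂ G) (hρ : CategoryTheory.Simple ρ) [Fintype I] :
    (Set.ncard {χ : G →* ℂˣ | (∀ i ∈ I, χ i = 1) ∧
        ∀ g : G, (χ g : ℂ) * ρ.character g = ρ.character g} : ℂ) =
      (Fintype.card I : ℂ)⁻¹ *
        ∑ x : I, conj (ρ.character (x : G)) * ρ.character (x : G) := by
  classical
  letI : CommGroup (G ⧸ I) := IsCyclic.commGroup
  letI : Fintype (G ⧸ I) := Fintype.ofFinite _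
  -- rewrite the right-hand side using conjugation-invariance of characters
  have hRHS : ∀ x : I, conj (ρ.character (x : G)) * ρ.character (x : G)
      = ρ.character (x : G) * ρ.character ((x : G))⁻¹ := by
    intro x
    rw [conj_character, mul_comm]
  rw [Finset.sum_congr rfl fun x _ => hRHS x]
  set π : G →* G ⧸ I := QuotientGroup.mk' I with hπdef
  set P : ((G ⧸ I) →* ℂˣ) → Prop :=
    fun ψ => ∀ g : G, ((ψ.comp π) g : ℂ) * ρ.character g = ρ.character g with hPdef
  have hπs : Function.Surjective π := QuotientGroup.mk'_surjective I
  have hinj : Function.Injective (fun ψ : (G ⧸ I) →* ℂˣ => ψ.comp π) :=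
    fun ψ₁ ψ₂ h => (MonoidHom.cancel_right hπs).mp h
  have hset : {χ : G →* ℂˣ | (∀ i ∈ I, χ i = 1) ∧
        ∀ g : G, (χ g : ℂ) * ρ.character g = ρ.character g}
      = (fun ψ : (G ⧸ I) →* ℂˣ => ψ.comp π) '' {ψ | P ψ} := by
    ext χ
    simp only [Set.mem_setOf_eq, Set.mem_image]
    constructor
    · rintro ⟨h1, h2⟩
      have hker : I ≤ χ.ker := fun x hx => h1 x hx
      have hlift : (QuotientGroup.lift I χ hker).comp π = χ := by
        ext g
        rfl
      refine ⟨QuotientGroup.lift I χ hker, fun g => ?_, hlift⟩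
      rw [hlift]
      exact h2 g
    · rintro ⟨ψ, hψ, rfl⟩
      refine ⟨fun i hi => ?_, hψ⟩
      show ψ (π i) = 1
      have hπi : π i = 1 := (QuotientGroup.eq_one_iff i).mpr hi
      rw [hπi, map_one]
  rw [hset, Set.ncard_image_of_injective _ hinj]
  have hc1 : ({ψ | P ψ}).ncard = (Finset.univ.filter P).card := by
    rw [Set.ncard_eq_toFinset_card', Set.toFinset_setOf]
  rw [hc1, Finset.card_filter]
  push_cast
  have hval : ∀ ψ : (G ⧸ I) →* ℂˣ, (if P ψ then (1 : ℂ) else 0)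
      = (Fintype.card G : ℂ)⁻¹ *
          ∑ g : G, ((ψ.comp π) g : ℂ) * ρ.character g * ρ.character g⁻¹ := by
    intro ψ
    by_cases hp : P ψ
    · rw [if_pos hp]
      have hsummand : ∀ g : G, ((ψ.comp π) g : ℂ) * ρ.character g * ρ.character g⁻¹
          = ρ.character g * ρ.character g⁻¹ := fun g => by rw [hp g]
      rw [Finset.sum_congr rfl fun g _ => hsummand g, my_average_char ρ ρ]
      haveI := hρ
      rw [FDRep.finrank_hom_simple_simple ρ ρ, if_pos ⟨CategoryTheory.Iso.refl ρ⟩]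
      norm_num
    · rw [if_neg hp]
      exact (average_eq_zero_of_not_stab ρ hρ (ψ.comp π) hp).symm
  rw [Finset.sum_congr rfl fun ψ _ => hval ψ, ← Finset.mul_sum, Finset.sum_comm]
  have hswap : ∀ g : G,
      (∑ ψ : (G ⧸ I) →* ℂˣ, ((ψ.comp π) g : ℂ) * ρ.character g * ρ.character g⁻¹)
      = (if g ∈ I then (Fintype.card (G ⧸ I) : ℂ) *
          (ρ.character g * ρ.character g⁻¹) else 0) := by
    intro g
    have h1 : ∀ ψ : (G ⧸ I) →* ℂˣ, ((ψ.comp π) g : ℂ) * ρ.character g * ρ.character g⁻¹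
        = ((ψ (π g) : ℂ)) * (ρ.character g * ρ.character g⁻¹) := fun ψ => by
      rw [MonoidHom.comp_apply, mul_assoc]
    rw [Finset.sum_congr rfl fun ψ _ => h1 ψ, ← Finset.sum_mul, sum_homUnits]
    have h4 : (if π g = 1 then (Fintype.card (G ⧸ I) : ℂ) else 0)
        = (if g ∈ I then (Fintype.card (G ⧸ I) : ℂ) else 0) :=
      if_congr (QuotientGroup.eq_one_iff g) rfl rfl
    rw [h4]
    split_ifs with h
    · ring
    · ring
  rw [Finset.sum_congr rfl fun g _ => hswap g]
  have h3 : (∑ g : G, if g ∈ I then (Fintype.card (G ⧸ I) : ℂ) *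
        (ρ.character g * ρ.character g⁻¹) else 0)
      = ∑ x : I, (Fintype.card (G ⧸ I) : ℂ) *
        (ρ.character (x : G) * ρ.character ((x : G))⁻¹) := by
    rw [← Finset.sum_filter]
    exact Finset.sum_subtype _ (by simp) _
  rw [h3, ← Finset.mul_sum, ← mul_assoc]
  have hL : (Fintype.card G : ℂ) = (Fintype.card (G ⧸ I) : ℂ) * (Fintype.card I : ℂ) := by
    have := Subgroup.card_eq_card_quotient_mul_card_subgroup I
    simp only [Nat.card_eq_fintype_card] at this
    exact_mod_cast this
  have hscal : (Fintype.card G : ℂ)⁻¹ * (Fintype.card (G ⧸ I) : ℂ)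
      = (Fintype.card I : ℂ)⁻¹ := by
    rw [hL, mul_inv]
    have hQ : (Fintype.card (G ⧸ I) : ℂ) ≠ 0 := Nat.cast_ne_zero.mpr Fintype.card_ne_zero
    field_simp
  rw [hscal]
end

section
/- Let λ₁,…,λₘ be nonzero complex numbers with m ≤ n, and let d be a prime with [ℚ(ζ_d):ℚ] > n² (equivalently d - 1 > n²). Suppose each λ_k is algebraic of degree at most n over ℚ (e.g., a Weil number appearing as a Frobenius eigenvalue of an n-dimensional representation). Then the multiset {λ₁,…,λₘ} is uniquely determined by the multiset {λ₁^d,…,λₘ^d} among multisets of algebraic numbers of degree ≤ n over ℚ. -/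
open Polynomial IntermediateField Module

/-- Key lemma: two nonzero algebraic numbers of degree ≤ n with equal d-th powers
(d prime, d - 1 > n²) are equal. -/
lemma eq_of_pow_d_eq (n d : ℕ) (hd : Nat.Prime d) (hdn : n ^ 2 < d - 1)
    (x y : ℂ) (hy0 : y ≠ 0)
    (hx : IsIntegral ℚ x ∧ (minpoly ℚ x).natDegree ≤ n)
    (hy : IsIntegral ℚ y ∧ (minpoly ℚ y).natDegree ≤ n)
    (hxy : x ^ d = y ^ d) : x = y := by
  set ζ : ℂ := x / y with hζdef
  have hζd : ζ ^ d = 1 := by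
    rw [hζdef, div_pow, hxy, div_self (pow_ne_zero _ hy0)]
  by_cases hζ1 : ζ = 1
  · rw [hζdef, div_eq_one_iff_eq hy0] at hζ1
    exact hζ1
  exfalso
  -- ζ is a primitive d-th root of unity
  have hprim : IsPrimitiveRoot ζ d := by
    refine ⟨hζd, fun l hl => ?_⟩
    have hg : ζ ^ Nat.gcd d l = 1 := pow_gcd_eq_one.mpr ⟨hζd, hl⟩
    rcases (hd.eq_one_or_self_of_dvd _ (Nat.gcd_dvd_left d l)) with h1 | h1
    · rw [h1, pow_one] at hg; exact absurd hg hζ1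
    · exact h1 ▸ Nat.gcd_dvd_right d l
  -- so its minpoly has degree d - 1
  have hmζ : (minpoly ℚ ζ).natDegree = d - 1 := by
    rw [← Polynomial.cyclotomic_eq_minpoly_rat hprim hd.pos,
      natDegree_cyclotomic, Nat.totient_prime hd]
  -- build the tower ℚ ⊆ ℚ(x) ⊆ ℚ(x, y)
  set F : IntermediateField ℚ ℂ := ℚ⟮x⟯ with hF
  haveI : FiniteDimensional ℚ F := adjoin.finiteDimensional hx.1
  have hyF : IsIntegral F y := hy.1.tower_top
  set E : IntermediateField F ℂ := F⟮y⟯ with hE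
  haveI : FiniteDimensional F E := adjoin.finiteDimensional hyF
  haveI : FiniteDimensional ℚ E := FiniteDimensional.trans ℚ F E
  have hxE : x ∈ E := by
    have : x ∈ F := mem_adjoin_simple_self ℚ x
    exact (IntermediateField.algebraMap_mem E ⟨x, this⟩ : _)
  have hyE : y ∈ E := mem_adjoin_simple_self F y
  have hζE : ζ ∈ E := div_mem hxE hyE
  -- minpoly of ζ has degree ≤ finrank ℚ E ≤ n * n
  have h1 : (minpoly ℚ ζ).natDegree ≤ finrank ℚ E := by
    have hle := minpoly.natDegree_le (A := ℚ) (⟨ζ, hζE⟩ : E)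
    have heq : minpoly ℚ ζ = minpoly ℚ (⟨ζ, hζE⟩ : E) :=
      minpoly.algebraMap_eq (algebraMap E ℂ).injective (⟨ζ, hζE⟩ : E)
    rw [heq]; exact hle
  have h2 : finrank ℚ E = finrank ℚ F * finrank F E :=
    (finrank_mul_finrank ℚ F E).symm
  have h3 : finrank ℚ F ≤ n := by
    rw [hF, adjoin.finrank hx.1]; exact hx.2
  have h4 : finrank F E ≤ n := by
    rw [hE, adjoin.finrank hyF]
    refine le_trans ?_ hy.2
    have hdvd : minpoly F y ∣ (minpoly ℚ y).map (algebraMap ℚ F) :=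
      minpoly.dvd_map_of_isScalarTower ℚ F y
    have hne : (minpoly ℚ y).map (algebraMap ℚ F) ≠ 0 := by
      simpa using (minpoly.ne_zero hy.1)
    calc (minpoly F y).natDegree ≤ ((minpoly ℚ y).map (algebraMap ℚ F)).natDegree :=
          natDegree_le_of_dvd hdvd hne
      _ = (minpoly ℚ y).natDegree := natDegree_map _
  have : d - 1 ≤ n ^ 2 := by
    calc d - 1 = (minpoly ℚ ζ).natDegree := hmζ.symm
      _ ≤ finrank ℚ E := h1
      _ = finrank ℚ F * finrank F E := h2
      _ ≤ n * n := Nat.mul_le_mul h3 h4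
      _ = n ^ 2 := (sq n).symm
  omega

/-- Eigenvalue recovery: if `d` is a prime with `d - 1 > n²`, then a multiset of
at most `n` nonzero algebraic numbers, each of degree at most `n` over `ℚ`, is
determined by the multiset of its `d`-th powers. -/
theorem multiset_determined_by_dth_powers (n d : ℕ) (hd : Nat.Prime d)
    (hdn : n ^ 2 < d - 1)
    (s t : Multiset ℂ)
    (hsn : Multiset.card s ≤ n) (htn : Multiset.card t ≤ n)
    (hs0 : ∀ x ∈ s, x ≠ 0) (ht0 : ∀ x ∈ t, x ≠ 0)
    (hsalg : ∀ x ∈ s, IsIntegral ℚ x ∧ (minpoly ℚ x).natDegree ≤ n)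
    (htalg : ∀ x ∈ t, IsIntegral ℚ x ∧ (minpoly ℚ x).natDegree ≤ n)
    (h : s.map (fun x => x ^ d) = t.map (fun x => x ^ d)) :
    s = t := by
  clear hsn htn
  induction s using Multiset.induction generalizing t with
  | empty =>
    have : t.map (fun x => x ^ d) = 0 := h.symm
    rw [Multiset.map_eq_zero] at this
    exact this.symm
  | cons a s ih =>
    have ha : a ^ d ∈ t.map (fun x => x ^ d) := by
      rw [← h]; exact Multiset.mem_map_of_mem _ (Multiset.mem_cons_self a s)
    obtain ⟨b, hb, hba⟩ := Multiset.mem_map.mp ha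
    have hab : a = b := by
      refine eq_of_pow_d_eq n d hd hdn a b (ht0 b hb) ?_ ?_ hba.symm
      · exact hsalg a (Multiset.mem_cons_self a s)
      · exact htalg b hb
    subst hab
    have ht : t = a ::ₘ t.erase a := (Multiset.cons_erase hb).symm
    rw [ht]
    congr 1
    refine ih (t.erase a) (fun x hx => hs0 x (Multiset.mem_cons_of_mem hx))
      (fun x hx => ht0 x (Multiset.mem_of_mem_erase hx))
      (fun x hx => hsalg x (Multiset.mem_cons_of_mem hx))
      (fun x hx => htalg x (Multiset.mem_of_mem_erase hx)) ?_
    have := h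
    rw [ht, Multiset.map_cons, Multiset.map_cons] at this
    exact (Multiset.cons_inj_right _).mp this
end

section
/- Let G be a finite group, I ⊴ G with G/I cyclic generated by the image of φ. Let ρ be any complex representation of G and {ρ_i} a set of irreducible representations of G, one from each orbit under twisting by one-dimensional characters of G/I. Then there exist representations Ψ_i of the cyclic group G/I such that ρ's semisimplification is isomorphic to ⊕_i ρ_i ⊗ Ψ_i, where Ψ_i is inflated from G/I. -/
noncomputable section
open Module LinearMap CategoryTheory

namespace UnramifiedTwists

variable {G : Type} [Group G]

/-- Diagonal representation with characters `c j`. -/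
def diagRep {k : Type} [Field k] {H : Type} [Monoid H] {n : ℕ} (c : Fin n → (H →* k)) :
    Representation k H (Fin n → k) where
  toFun h := LinearMap.pi fun j => c j h • LinearMap.proj j
  map_one' := by ext v j; simp
  map_mul' a b := by ext v j; simp [Module.End.mul_apply, mul_smul]

lemma trace_diag {k : Type} [Field k] {n : ℕ} (c : Fin n → k) :
    LinearMap.trace k (Fin n → k) (LinearMap.pi fun j => c j • LinearMap.proj j) = ∑ j, c j := by
  rw [trace_eq_matrix_trace k (Pi.basisFun k (Fin n))]
  simp [Matrix.trace, Matrix.diag, LinearMap.toMatrix_apply]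

lemma trace_eq_add_of_isCompl {k : Type} [Field k] {V : Type} [AddCommGroup V] [Module k V]
    [FiniteDimensional k V]
    (f : V →ₗ[k] V) (p q : Submodule k V) (h : IsCompl p q)
    (hp : ∀ x ∈ p, f x ∈ p) (hq : ∀ x ∈ q, f x ∈ q) :
    trace k V f = trace k p (f.restrict hp) + trace k q (f.restrict hq) := by
  set e := Submodule.prodEquivOfIsCompl p q h
  have key : e.symm.conj f = LinearMap.prodMap (f.restrict hp) (f.restrict hq) := by
    apply LinearMap.ext; intro z
    apply e.injective
    rw [LinearEquiv.conj_apply]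
    simp only [LinearMap.comp_apply, LinearEquiv.coe_coe, LinearEquiv.symm_symm,
      LinearEquiv.apply_symm_apply]
    have he : ∀ w : p × q, e w = (w.1 : V) + (w.2 : V) := by
      intro w; simp [e, Submodule.coe_prodEquivOfIsCompl']
    rw [he, he]
    simp [LinearMap.restrict_apply, map_add]
  calc trace k V f = trace k (p × q) (e.symm.conj f) := (trace_conj' f e.symm).symm
    _ = _ := by rw [key, trace_prodMap']

/-- The subrepresentation on an invariant submodule. -/
def subRep {k V : Type} [Field k] [AddCommGroup V] [Module k V] (σ : Representation k G V)
    (p : Submodule k V) (h : ∀ g, ∀ x ∈ p, σ g x ∈ p) : Representation k G p where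
  toFun g := (σ g).restrict (h g)
  map_one' := by ext x; simp [LinearMap.restrict_apply]
  map_mul' a b := by ext x; simp [LinearMap.restrict_apply, Module.End.mul_apply]

/-- Maschke: an invariant submodule has an invariant complement. -/
lemma exists_invariant_compl [Fintype G] {V : Type} [AddCommGroup V] [Module ℂ V]
    (σ : Representation ℂ G V) [FiniteDimensional ℂ V]
    (p : Submodule ℂ V) (hp : ∀ g, ∀ x ∈ p, σ g x ∈ p) :
    ∃ q : Submodule ℂ V, (∀ g, ∀ x ∈ q, σ g x ∈ q) ∧ IsCompl p q := by
  obtain ⟨q0, hq0⟩ := Submodule.exists_isCompl p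
  set π0 := p.linearProjOfIsCompl q0 hq0 with hπ0
  set F : G → (V →ₗ[ℂ] p) := fun g =>
    ((σ g⁻¹).restrict (fun x hx => hp g⁻¹ x hx)) ∘ₗ π0 ∘ₗ (σ g : V →ₗ[ℂ] V) with hF
  have cardnz : (Fintype.card G : ℂ) ≠ 0 := Nat.cast_ne_zero.mpr Fintype.card_ne_zero
  set π : V →ₗ[ℂ] p := (Fintype.card G : ℂ)⁻¹ • ∑ g, F g with hπ
  have hFfix : ∀ (g : G) (x : p), F g (x : V) = x := by
    intro g x
    apply Subtype.ext
    have h1 : π0 (σ g (x : V)) = ⟨σ g (x : V), hp g x x.2⟩ :=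
      p.linearProjOfIsCompl_apply_left hq0 ⟨σ g (x : V), hp g x x.2⟩
    simp only [hF, LinearMap.comp_apply, h1, LinearMap.restrict_apply]
    have : σ g⁻¹ (σ g (x : V)) = x := by
      rw [← Module.End.mul_apply, ← map_mul σ, inv_mul_cancel, map_one, Module.End.one_apply]
    simpa using this
  have hπfix : ∀ x : p, π (x : V) = x := by
    intro x
    simp only [hπ, LinearMap.smul_apply, LinearMap.sum_apply, hFfix]
    rw [Finset.sum_const, Finset.card_univ]
    rw [← Nat.cast_smul_eq_nsmul ℂ, smul_smul, inv_mul_cancel₀ cardnz, one_smul]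
  have hπcomm : ∀ (g : G) (x : V), (π (σ g x) : V) = σ g (π x : V) := by
    intro g x
    have step : ∀ h : G, ((F h) (σ g x) : V) = σ g ((F (h * g)) x : V) := by
      intro h
      simp only [hF, LinearMap.comp_apply, LinearMap.restrict_apply]
      rw [← Module.End.mul_apply _ (σ g), ← map_mul σ]
      rw [show (h * g)⁻¹ = g⁻¹ * h⁻¹ by group, map_mul σ h g, map_mul σ g⁻¹ h⁻¹]
      simp only [Module.End.mul_apply]
      rw [← Module.End.mul_apply (σ g) (σ g⁻¹), ← map_mul σ, mul_inv_cancel, map_one,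
        Module.End.one_apply]
    have reida : ∑ h : G, ((F (h * g)) x : V) = ∑ h : G, ((F h) x : V) :=
      Fintype.sum_bijective (· * g) (Group.mulRight_bijective g) _ _ (fun h => rfl)
    have sumeq : ∑ h : G, ((F h) (σ g x) : V) = σ g (∑ h : G, ((F h) x : V)) := by
      rw [map_sum]
      calc ∑ h : G, ((F h) (σ g x) : V) = ∑ h : G, σ g ((F (h * g)) x : V) := by
            exact Finset.sum_congr rfl fun h _ => step h
        _ = _ := by rw [← map_sum, reida, map_sum]
    simp only [hπ, LinearMap.smul_apply, LinearMap.sum_apply, Submodule.coe_smul,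
      Submodule.coe_sum, sumeq, map_smul]
  refine ⟨LinearMap.ker π, ?_, LinearMap.isCompl_of_proj hπfix⟩
  intro g x hx
  rw [LinearMap.mem_ker] at hx ⊢
  have := hπcomm g x
  rw [hx] at this
  apply Subtype.ext
  simpa using this

lemma simple_of_no_invariant {V : Type} [AddCommGroup V] [Module ℂ V] [FiniteDimensional ℂ V]
    (σ : Representation ℂ G V) (h0 : Nontrivial V)
    (hirr : ∀ p : Submodule ℂ V, (∀ g, ∀ x ∈ p, σ g x ∈ p) → p = ⊥ ∨ p = ⊤) :
    Simple (FDRep.of σ) := by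
  constructor
  intro Y f m
  constructor
  · intro hiso hf0
    have hid : 𝟙 (FDRep.of σ) = (0 : FDRep.of σ ⟶ FDRep.of σ) := by
      calc 𝟙 (FDRep.of σ) = inv f ≫ f := (IsIso.inv_hom_id f).symm
        _ = inv f ≫ 0 := congrArg (fun t => inv f ≫ t) hf0
        _ = 0 := Limits.comp_zero
    obtain ⟨v, hv⟩ := exists_ne (0 : V)
    apply hv
    have := congrArg Action.Hom.hom hid
    calc v = (𝟙 (FDRep.of σ) : FDRep.of σ ⟶ FDRep.of σ).hom v := rfl
      _ = ((0 : FDRep.of σ ⟶ FDRep.of σ)).hom v := by rw [this]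
      _ = 0 := rfl
  · intro hf0
    have hcomm : ∀ g, (f.hom.hom.hom : (Y : Type) →ₗ[ℂ] V) ∘ₗ Y.ρ g = σ g ∘ₗ f.hom.hom.hom := fun g => congrArg (fun t => t.hom.hom) (f.comm g)
    have hinj : Function.Injective (f.hom.hom.hom : (Y : Type) →ₗ[ℂ] V) := by
      rw [← LinearMap.ker_eq_bot]
      set K := LinearMap.ker (f.hom.hom.hom : (Y : Type) →ₗ[ℂ] V) with hK
      have hKinv : ∀ g, ∀ x ∈ K, Y.ρ g x ∈ K := by
        intro g x hx
        rw [hK, LinearMap.mem_ker] at hx ⊢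
        calc (f.hom.hom.hom : (Y : Type) →ₗ[ℂ] V) (Y.ρ g x) = (f.hom.hom.hom ∘ₗ Y.ρ g) x := rfl
          _ = (σ g ∘ₗ f.hom.hom.hom) x := LinearMap.congr_fun (hcomm g) x
          _ = σ g (f.hom.hom.hom x) := rfl
          _ = 0 := by rw [hx, map_zero]
      set j : FDRep.of (subRep Y.ρ K hKinv) ⟶ Y :=
        ⟨FGModuleCat.ofHom K.subtype, fun g => rfl⟩ with hj
      have hjf : j ≫ f = (0 : FDRep.of (subRep Y.ρ K hKinv) ⟶ FDRep.of σ) := by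
        apply Action.Hom.ext
        apply FGModuleCat.hom_ext; apply LinearMap.ext
        intro x
        exact x.2
      have hj0 : j = 0 := (cancel_mono f).mp (by rw [hjf, Limits.zero_comp])
      have hsub : (K.subtype : K →ₗ[ℂ] (Y : Type)) = 0 := congrArg (fun t => t.hom.hom.hom) hj0
      ext x
      simp only [Submodule.mem_bot]
      constructor
      · intro hx
        have : K.subtype ⟨x, hx⟩ = 0 := by rw [hsub]; rfl
        simpa using this
      · intro hx; rw [hx]; exact K.zero_mem
    have hsurj : Function.Surjective (f.hom.hom.hom : (Y : Type) →ₗ[ℂ] V) := by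
      rw [← LinearMap.range_eq_top]
      have hRinv : ∀ g, ∀ y ∈ LinearMap.range (f.hom.hom.hom : (Y : Type) →ₗ[ℂ] V),
          σ g y ∈ LinearMap.range (f.hom.hom.hom : (Y : Type) →ₗ[ℂ] V) := by
        rintro g y ⟨x, rfl⟩
        refine ⟨Y.ρ g x, ?_⟩
        calc (f.hom.hom.hom : (Y : Type) →ₗ[ℂ] V) (Y.ρ g x) = (f.hom.hom.hom ∘ₗ Y.ρ g) x := rfl
          _ = (σ g ∘ₗ f.hom.hom.hom) x := LinearMap.congr_fun (hcomm g) x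
          _ = σ g (f.hom.hom.hom x) := rfl
      rcases hirr (LinearMap.range f.hom.hom.hom) hRinv with hbot | htop
      · exfalso
        apply hf0
        apply Action.Hom.ext
        apply FGModuleCat.hom_ext; apply LinearMap.ext
        intro x
        have : f.hom.hom.hom x ∈ LinearMap.range (f.hom.hom.hom : (Y : Type) →ₗ[ℂ] V) := ⟨x, rfl⟩
        rw [hbot] at this
        simpa using this
      · exact htop
    set e : (Y : Type) ≃ₗ[ℂ] V :=
      LinearEquiv.ofBijective (f.hom.hom.hom : (Y : Type) →ₗ[ℂ] V) ⟨hinj, hsurj⟩ with he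
    have hginv : ∀ g, e.symm.toLinearMap ∘ₗ σ g = Y.ρ g ∘ₗ e.symm.toLinearMap := by
      intro g
      apply LinearMap.ext
      intro v
      show e.symm (σ g v) = Y.ρ g (e.symm v)
      apply e.injective
      calc e (e.symm (σ g v)) = σ g v := e.apply_symm_apply _
        _ = σ g (e (e.symm v)) := by rw [e.apply_symm_apply]
        _ = (σ g ∘ₗ f.hom.hom.hom) (e.symm v) := rfl
        _ = (f.hom.hom.hom ∘ₗ Y.ρ g) (e.symm v) := (LinearMap.congr_fun (hcomm g) _).symm
        _ = e (Y.ρ g (e.symm v)) := rfl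
    set ginv : FDRep.of σ ⟶ Y := ⟨FGModuleCat.ofHom e.symm.toLinearMap, fun g => FGModuleCat.hom_ext (hginv g)⟩ with hg
    refine ⟨⟨ginv, ?_, ?_⟩⟩
    · apply Action.Hom.ext
      apply FGModuleCat.hom_ext; apply LinearMap.ext
      intro x
      exact e.symm_apply_apply x
    · apply Action.Hom.ext
      apply FGModuleCat.hom_ext; apply LinearMap.ext
      intro v
      exact e.apply_symm_apply v

lemma aux_decomp [Fintype G] (I : Subgroup G)
    {ι : Type} [Fintype ι] (ρi : ι → FDRep ℂ G)
    (hexhaust : ∀ σ : FDRep ℂ G, CategoryTheory.Simple σ →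
      ∃ i, ∃ χ : G →* ℂˣ, (∀ x ∈ I, χ x = 1) ∧
        ∀ g : G, σ.character g = (χ g : ℂ) * (ρi i).character g)
    (n : ℕ) :
    ∀ (V : Type) [AddCommGroup V] [Module ℂ V] [FiniteDimensional ℂ V]
      (σ : Representation ℂ G V), finrank ℂ V = n →
      ∃ s : ι → Multiset {χ : G →* ℂˣ // ∀ x ∈ I, χ x = 1},
        ∀ g : G, LinearMap.trace ℂ V (σ g) =
          ∑ i, (ρi i).character g * ((s i).map fun χ => ((χ.1 g : ℂˣ) : ℂ)).sum := by
  induction n using Nat.strong_induction_on with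
  | _ n IH =>
  intro V _ _ _ σ hn
  classical
  by_cases hs : CategoryTheory.Simple (FDRep.of σ)
  · obtain ⟨i, χ, hχI, hχ⟩ := hexhaust (FDRep.of σ) hs
    refine ⟨fun j => if j = i then {⟨χ, hχI⟩} else 0, fun g => ?_⟩
    have h1 : LinearMap.trace ℂ V (σ g) = (FDRep.of σ).character g := rfl
    rw [h1, hχ g, Finset.sum_eq_single i]
    · simp [mul_comm]
    · intro b _ hb; simp [hb]
    · intro h; exact absurd (Finset.mem_univ i) h
  rcases Nat.eq_zero_or_pos n with h0 | hpos
  · refine ⟨fun _ => 0, fun g => ?_⟩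
    have hsub : Subsingleton V := finrank_zero_iff.mp (by rw [hn, h0])
    have hσ : σ g = 0 := Subsingleton.elim _ _
    simp [hσ]
  · have hnt : Nontrivial V := by
      have : 0 < finrank ℂ V := by rw [hn]; exact hpos
      exact Module.finrank_pos_iff.mp this
    have hex : ¬ ∀ p : Submodule ℂ V, (∀ g, ∀ x ∈ p, σ g x ∈ p) → p = ⊥ ∨ p = ⊤ := by
      intro h; exact hs (simple_of_no_invariant σ hnt h)
    push_neg at hex
    obtain ⟨p, hpinv, hpbot, hptop⟩ := hex
    obtain ⟨q, hqinv, hcompl⟩ := exists_invariant_compl σ p hpinv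
    have hplt : finrank ℂ p < n := hn ▸ Submodule.finrank_lt hptop
    have hqlt : finrank ℂ q < n := by
      have hq : q ≠ ⊤ := by
        intro h
        apply hpbot
        have h2 := hcompl.inf_eq_bot
        rw [h, inf_top_eq] at h2
        exact h2
      exact hn ▸ Submodule.finrank_lt hq
    obtain ⟨s1, hs1⟩ := IH _ hplt p (subRep σ p hpinv) rfl
    obtain ⟨s2, hs2⟩ := IH _ hqlt q (subRep σ q hqinv) rfl
    refine ⟨fun i => s1 i + s2 i, fun g => ?_⟩
    rw [trace_eq_add_of_isCompl (σ g) p q hcompl (hpinv g) (hqinv g)]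
    have e1 : LinearMap.trace ℂ p ((σ g).restrict (hpinv g)) =
        ∑ i, (ρi i).character g * ((s1 i).map fun χ => ((χ.1 g : ℂˣ) : ℂ)).sum := hs1 g
    have e2 : LinearMap.trace ℂ q ((σ g).restrict (hqinv g)) =
        ∑ i, (ρi i).character g * ((s2 i).map fun χ => ((χ.1 g : ℂˣ) : ℂ)).sum := hs2 g
    rw [e1, e2, ← Finset.sum_add_distrib]
    refine Finset.sum_congr rfl fun i _ => ?_
    rw [Multiset.map_add, Multiset.sum_add, mul_add]

end UnramifiedTwists

open UnramifiedTwists Module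

/-- Decomposition into unramified twists: let `{ρᵢ}` be irreducible complex
representations of `G`, one in each orbit under twisting by one-dimensional
characters trivial on `I`. Then every representation `ρ` of `G` decomposes (up
to semisimplification, i.e. at the level of characters) as `⊕ᵢ ρᵢ ⊗ Ψᵢ` with
`Ψᵢ` inflated from the cyclic quotient `G/I`. -/
theorem decomposition_into_unramified_twists (G : Type) [Group G] [Fintype G]
    (I : Subgroup G) [I.Normal] [IsCyclic (G ⧸ I)]
    (ι : Type) [Fintype ι] (ρi : ι → FDRep ℂ G)
    (hsimple : ∀ i, CategoryTheory.Simple (ρi i))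
    (hdistinct : ∀ i j, i ≠ j →
      ¬ ∃ χ : G →* ℂˣ, (∀ x ∈ I, χ x = 1) ∧
        ∀ g : G, (ρi j).character g = (χ g : ℂ) * (ρi i).character g)
    (hexhaust : ∀ σ : FDRep ℂ G, CategoryTheory.Simple σ →
      ∃ i, ∃ χ : G →* ℂˣ, (∀ x ∈ I, χ x = 1) ∧
        ∀ g : G, σ.character g = (χ g : ℂ) * (ρi i).character g)
    (ρ : FDRep ℂ G) :
    ∃ Ψ : ι → FDRep ℂ (G ⧸ I),
      ∀ g : G, ρ.character g =
        ∑ i, (ρi i).character g * (Ψ i).character ((g : G ⧸ I)) := by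
  obtain ⟨s, hsum⟩ := aux_decomp I ρi hexhaust (finrank ℂ ρ) ρ ρ.ρ rfl
  -- turn each multiset of characters of `G` trivial on `I` into a representation of `G ⧸ I`
  have hker : ∀ χ : {χ : G →* ℂˣ // ∀ x ∈ I, χ x = 1}, I ≤ ((χ : G →* ℂˣ)).ker := by
    intro χ x hx
    rw [MonoidHom.mem_ker]
    exact χ.2 x hx
  set c : ∀ i : ι, Fin (s i).toList.length → ((G ⧸ I) →* ℂ) := fun i j =>
    (Units.coeHom ℂ).comp (QuotientGroup.lift I ((s i).toList.get j).1 (hker _))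
  refine ⟨fun i => FDRep.of (diagRep (c i)), fun g => ?_⟩
  have hchar : ρ.character g = LinearMap.trace ℂ ρ (ρ.ρ g) := rfl
  rw [hchar, hsum g]
  refine Finset.sum_congr rfl fun i _ => ?_
  congr 1
  -- character of the diagonal representation
  have h1 : (FDRep.of (diagRep (c i))).character ((g : G ⧸ I)) = ∑ j, c i j ((g : G ⧸ I)) := by
    have : (FDRep.of (diagRep (c i))).character ((g : G ⧸ I)) =
        LinearMap.trace ℂ _ (diagRep (c i) ((g : G ⧸ I))) := rfl
    rw [this]
    exact trace_diag _
  rw [h1]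
  have h2 : ∀ j, c i j ((g : G ⧸ I)) = (((s i).toList.get j).1 g : ℂ) := by
    intro j
    show (Units.coeHom ℂ) ((QuotientGroup.lift I ((s i).toList.get j).1 (hker _)) (↑g)) = _
    rw [QuotientGroup.lift_mk']
    rfl
  set F : {χ : G →* ℂˣ // ∀ x ∈ I, χ x = 1} → ℂ := fun χ => ((χ.1 g : ℂˣ) : ℂ) with hFdef
  calc ((s i).map F).sum
      = (Multiset.map F ((s i).toList : Multiset _)).sum := by rw [Multiset.coe_toList]
    _ = ((s i).toList.map F).sum := by rw [Multiset.map_coe, Multiset.sum_coe]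
    _ = ∑ j, F ((s i).toList.get j) := by
        conv_lhs => rw [← List.ofFn_get (s i).toList, List.map_ofFn, List.sum_ofFn]
        rfl
    _ = ∑ j, c i j ((g : G ⧸ I)) := Finset.sum_congr rfl fun j _ => (h2 j).symm
end
end
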